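/- Let (u_n) be a bounded sequence of complex numbers whose Cesàro means (1/n)·Σ_{k=0}^{n-1} u_k converge to a limit l. Then the product Π_{k=0}^{n-1} (1 + u_k/n) converges to e^l as n → ∞. -/

import Mathlib

open Filter Topology

/-- If `(uₙ)` is a bounded complex sequence whose Cesàro means converge to `l`, then
`∏_{k=0}^{n-1} (1 + uₖ/n)` converges to `e^l`. -/
theorem statement1 (u : ℕ → ℂ) (l : ℂ)
    (hBdd : ∃ C : ℝ, ∀ n : ℕ, ‖u n‖ ≤ C)
    (hCesaro : Tendsto (fun n : ℕ => ((n : ℂ)⁻¹) * ∑ k ∈ Finset.range n, u k)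
      atTop (𝓝 l)) :
    Tendsto (fun n : ℕ => ∏ k ∈ Finset.range n, (1 + u k / n)) atTop (𝓝 (Complex.exp l)) := by
  obtain ⟨C, hC⟩ := hBdd
  set C₁ : ℝ := max C 1 with hC₁def
  have hC₁ : ∀ n, ‖u n‖ ≤ C₁ := fun n => le_trans (hC n) (le_max_left _ _)
  have hC₁pos : (1:ℝ) ≤ C₁ := le_max_right _ _
  set S : ℕ → ℂ := fun n => ∑ k ∈ Finset.range n, Complex.log (1 + u k / n) with hSdef
  -- key smallness: for n ≥ 2*C₁, each term u k / n has norm ≤ 1/2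
  have hsmall : ∀ᶠ n : ℕ in atTop, ∀ k, ‖u k / (n:ℂ)‖ ≤ 1/2 := by
    filter_upwards [eventually_ge_atTop (⌈2*C₁⌉₊)] with n hn k
    have hn' : 2*C₁ ≤ (n:ℝ) := le_trans (Nat.le_ceil _) (by exact_mod_cast hn)
    have hnpos : (0:ℝ) < n := lt_of_lt_of_le (by linarith) hn'
    rw [norm_div, Complex.norm_natCast, div_le_iff₀ hnpos]
    calc ‖u k‖ ≤ C₁ := hC₁ k
      _ ≤ 1/2 * (2*C₁) := by ring_nf; rfl
      _ ≤ 1/2 * n := by nlinarith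
  -- the sum of logs tends to l
  have hS : Tendsto S atTop (𝓝 l) := by
    have hdiff : Tendsto (fun n : ℕ => S n - ((n : ℂ)⁻¹) * ∑ k ∈ Finset.range n, u k)
        atTop (𝓝 0) := by
      apply squeeze_zero_norm' (a := fun n : ℕ => C₁^2 / n) ?_ ?_
      · filter_upwards [hsmall, eventually_ge_atTop 1] with n hn hn1
        have hnpos : (0:ℝ) < n := by exact_mod_cast hn1
        have : S n - ((n : ℂ)⁻¹) * ∑ k ∈ Finset.range n, u k
            = ∑ k ∈ Finset.range n, (Complex.log (1 + u k / n) - u k / n) := by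
          rw [Finset.sum_sub_distrib, Finset.mul_sum]
          congr 1
          exact Finset.sum_congr rfl fun k _ => by rw [div_eq_inv_mul]
        rw [this]
        calc ‖∑ k ∈ Finset.range n, (Complex.log (1 + u k / n) - u k / n)‖
            ≤ ∑ k ∈ Finset.range n, ‖Complex.log (1 + u k / n) - u k / n‖ :=
              norm_sum_le _ _
          _ ≤ ∑ k ∈ Finset.range n, (C₁/n)^2 := by
              apply Finset.sum_le_sum
              intro k _
              have hz := hn k
              have hz1 : ‖u k / (n:ℂ)‖ < 1 := lt_of_le_of_lt hz (by norm_num)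
              have hzC : ‖u k / (n:ℂ)‖ ≤ C₁ / n := by
                rw [norm_div, Complex.norm_natCast]
                apply div_le_div_of_nonneg_right (hC₁ k)
                · simpa using hnpos
              calc ‖Complex.log (1 + u k / n) - u k / n‖
                  ≤ ‖u k / (n:ℂ)‖ ^ 2 * (1 - ‖u k / (n:ℂ)‖)⁻¹ / 2 :=
                    Complex.norm_log_one_add_sub_self_le hz1
                _ ≤ ‖u k / (n:ℂ)‖ ^ 2 * 2 / 2 := by
                    have h2 : (1 - ‖u k / (n:ℂ)‖)⁻¹ ≤ 2 := by
                      rw [inv_le_comm₀ (by linarith [hz]) (by norm_num)]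
                      linarith [hz]
                    have := sq_nonneg ‖u k / (n:ℂ)‖
                    gcongr
                _ = ‖u k / (n:ℂ)‖ ^ 2 := by ring
                _ ≤ (C₁/n)^2 := by
                    apply pow_le_pow_left₀ (norm_nonneg _) hzC
          _ = n * (C₁/n)^2 := by
              rw [Finset.sum_const, Finset.card_range, nsmul_eq_mul]
          _ = C₁^2 / n := by field_simp
      · have : Tendsto (fun n : ℕ => C₁^2 / n) atTop (𝓝 0) :=
          tendsto_const_nhds.div_atTop tendsto_natCast_atTop_atTop
        exact this
    have := hdiff.add hCesaro
    simpa using this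
  -- eventually the product equals exp (S n)
  have heq : ∀ᶠ n : ℕ in atTop,
      (∏ k ∈ Finset.range n, (1 + u k / (n:ℂ))) = Complex.exp (S n) := by
    filter_upwards [hsmall] with n hn
    rw [hSdef, Complex.exp_sum]
    apply Finset.prod_congr rfl
    intro k _
    have hne : 1 + u k / (n:ℂ) ≠ 0 := by
      intro h
      have : ‖u k / (n:ℂ)‖ = 1 := by
        have : u k / (n:ℂ) = -1 := by linear_combination h
        rw [this]; simp
      linarith [hn k]
    rw [Complex.exp_log hne]
  exact Tendsto.congr' (heq.mono fun n h => h.symm) ((Complex.continuous_exp.tendsto l).comp hS)
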